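/- (Proposition 10.) Let (A^F, R^F, A^?, R^?, R^↔, A^C, R^C) be a control AF, let v_CAF = AW_{A^F} ∪ ATT_{R^F} ∪ ATT_{R^C}, let control^CAF = mkTrueSome(AW_{A^C}), and let makeComp^CAF = mkTrueSome(AW_{A^?}); mkTrueSome(ATT_{R^?}); dis(ATT_{R^↔}). Then: (i) if (v_CAF, v) ∈ ‖control^CAF; makeComp^CAF‖ then there is a control configuration CFG ⊆ A^C and a completion (A*, R*) of CAF_CFG such that (A_v, R_v) = (A*, R*); and (ii) for every control configuration CFG ⊆ A^C and every completion (A*, R*) of CAF_CFG there is a valuation v with (v_CAF, v) ∈ ‖control^CAF; makeComp^CAF‖ and (A_v, R_v) = (A*, R*). -/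

import Mathlib

noncomputable section

namespace DLPA

/-- Propositional variables: awareness, acceptance, attack, auxiliary acceptance
copies, plus countably many further auxiliary variables. -/
inductive PVar (U : Type) : Type
  | aw : U → PVar U
  | inn : U → PVar U
  | att : U → U → PVar U
  | inn' : U → PVar U
  | aux : Nat → PVar U

-- DL-PA formulas and programs, by mutual recursion.
mutual
  inductive Form (U : Type) : Type
    | var : PVar U → Form U
    | neg : Form U → Form U
    | conj : Form U → Form U → Form U
    | box : Prog U → Form U → Form U
  inductive Prog (U : Type) : Type
    | add : PVar U → Prog U           -- +p
    | rem : PVar U → Prog U           -- −p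
    | test : Form U → Prog U          -- φ?
    | seq : Prog U → Prog U → Prog U
    | choice : Prog U → Prog U → Prog U
    | conv : Prog U → Prog U
end

variable {U : Type}

/-- A valuation is a set of propositional variables. -/
abbrev Val (U : Type) := Set (PVar U)

-- Satisfaction of formulas and interpretation of programs, by mutual recursion.
mutual
  def Sat : Val U → Form U → Prop
    | v, Form.var p => p ∈ v
    | v, Form.neg φ => ¬ Sat v φ
    | v, Form.conj φ ψ => Sat v φ ∧ Sat v ψ
    | v, Form.box π φ => ∀ w, Rel π v w → Sat w φ
  def Rel : Prog U → Val U → Val U → Prop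
    | Prog.add p, v, w => w = v ∪ {p}
    | Prog.rem p, v, w => w = v \ {p}
    | Prog.test φ, v, w => w = v ∧ Sat v φ
    | Prog.seq π₁ π₂, v, w => ∃ u, Rel π₁ v u ∧ Rel π₂ u w
    | Prog.choice π₁ π₂, v, w => Rel π₁ v w ∨ Rel π₂ v w
    | Prog.conv π, v, w => Rel π w v
end

def Form.falsum : Form U := Form.conj (Form.var (PVar.aux 0)) (Form.neg (Form.var (PVar.aux 0)))
def Form.top : Form U := Form.neg Form.falsum
def Form.impl (φ ψ : Form U) : Form U := Form.neg (Form.conj φ (Form.neg ψ))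
def Form.disj (φ ψ : Form U) : Form U := Form.neg (Form.conj (Form.neg φ) (Form.neg ψ))
def Form.equiv (φ ψ : Form U) : Form U := Form.conj (Form.impl φ ψ) (Form.impl ψ φ)
def Form.dia (π : Prog U) (φ : Form U) : Form U := Form.neg (Form.box π (Form.neg φ))
def Prog.skip : Prog U := Prog.test Form.top

/-- Sequential composition of a list of programs (`skip` for the empty list). -/
def seqList {β : Type} (f : β → Prog U) : List β → Prog U
  | [] => Prog.skip
  | p :: ps => Prog.seq (f p) (seqList f ps)

/-- Nondeterministic composition of a list of programs (`skip` for the empty list). -/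
def unionList {β : Type} (f : β → Prog U) : List β → Prog U
  | [] => Prog.skip
  | [p] => f p
  | p :: ps => Prog.choice (f p) (unionList f ps)

def mkTrueOne (L : List (PVar U)) : Prog U :=
  unionList (fun p => Prog.seq (Prog.test (Form.neg (Form.var p))) (Prog.add p)) L
def mkFalseOne (L : List (PVar U)) : Prog U :=
  unionList (fun p => Prog.seq (Prog.test (Form.var p)) (Prog.rem p)) L
def mkTrueSome (L : List (PVar U)) : Prog U :=
  seqList (fun p => Prog.choice (Prog.add p) Prog.skip) L
def mkFalseSome (L : List (PVar U)) : Prog U :=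
  seqList (fun p => Prog.choice (Prog.rem p) Prog.skip) L
def vary (L : List (PVar U)) : Prog U :=
  seqList (fun p => Prog.choice (Prog.add p) (Prog.rem p)) L
/-- dis(ATT_R): for each pair (x,y) in the list, make true att_{x,y} or att_{y,x}. -/
def dis (L : List (U × U)) : Prog U :=
  seqList (fun q => Prog.choice (Prog.add (PVar.att q.1 q.2)) (Prog.add (PVar.att q.2 q.1))) L

def conjList : List (Form U) → Form U
  | [] => Form.top
  | φ :: φs => Form.conj φ (conjList φs)
def disjList : List (Form U) → Form U
  | [] => Form.falsum
  | φ :: φs => Form.disj φ (disjList φs)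

/-- The elements of a finite universe in a fixed order. -/
def enum (U : Type) [Fintype U] : List U := Finset.univ.toList

def bigConj [Fintype U] (f : U → Form U) : Form U := conjList ((enum U).map f)
def bigDisj [Fintype U] (f : U → Form U) : Form U := disjList ((enum U).map f)

def INlist (U : Type) [Fintype U] : List (PVar U) := (enum U).map PVar.inn

/-- copy(IN_U) copies the value of in_x to in'_x, for every x ∈ U. -/
def copyIN (U : Type) [Fintype U] : Prog U :=
  seqList (fun x => Prog.choice
      (Prog.seq (Prog.test (Form.var (PVar.inn x))) (Prog.add (PVar.inn' x)))
      (Prog.seq (Prog.test (Form.neg (Form.var (PVar.inn x)))) (Prog.rem (PVar.inn' x))))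
    (enum U)

def Well (U : Type) [Fintype U] : Form U :=
  bigConj (fun x => Form.impl (Form.var (PVar.inn x)) (Form.var (PVar.aw x)))

def ConFree (U : Type) [Fintype U] : Form U :=
  Form.conj (Well U) (bigConj fun x => bigConj fun y =>
    Form.neg (Form.conj (Form.var (PVar.inn x))
      (Form.conj (Form.var (PVar.inn y)) (Form.var (PVar.att x y)))))

def AdmissibleF (U : Type) [Fintype U] : Form U :=
  Form.conj (ConFree U) (bigConj fun x => Form.impl (Form.var (PVar.inn x))
    (bigConj fun y => Form.impl (Form.conj (Form.var (PVar.aw y)) (Form.var (PVar.att y x)))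
      (bigDisj fun z => Form.conj (Form.var (PVar.inn z)) (Form.var (PVar.att z y)))))

def StableF (U : Type) [Fintype U] : Form U :=
  Form.conj (Well U) (bigConj fun x => Form.impl (Form.var (PVar.aw x))
    (Form.equiv (Form.var (PVar.inn x))
      (Form.neg (bigDisj fun y => Form.conj (Form.var (PVar.inn y)) (Form.var (PVar.att y x))))))

def CompleteF (U : Type) [Fintype U] : Form U :=
  Form.conj (ConFree U) (bigConj fun x => Form.equiv (Form.var (PVar.inn x))
    (bigConj fun y => Form.impl (Form.conj (Form.var (PVar.aw y)) (Form.var (PVar.att y x)))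
      (bigDisj fun z => Form.conj (Form.var (PVar.inn z)) (Form.var (PVar.att z y)))))

def GroundedF (U : Type) [Fintype U] : Form U :=
  Form.conj (CompleteF U)
    (Form.box (Prog.seq (mkFalseOne (INlist U)) (mkFalseSome (INlist U))) (Form.neg (CompleteF U)))

def PreferredF (U : Type) [Fintype U] : Form U :=
  Form.conj (AdmissibleF U)
    (Form.box (Prog.seq (mkTrueOne (INlist U)) (mkTrueSome (INlist U))) (Form.neg (AdmissibleF U)))

def NaiveF (U : Type) [Fintype U] : Form U :=
  Form.conj (ConFree U) (Form.box (mkTrueOne (INlist U)) (Form.neg (ConFree U)))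

def IncludedInCp (U : Type) [Fintype U] : Form U :=
  bigConj fun x => Form.impl
    (Form.disj (Form.var (PVar.inn x)) (Form.conj (Form.var (PVar.aw x))
      (bigDisj fun y => Form.conj (Form.var (PVar.inn y)) (Form.var (PVar.att y x)))))
    (Form.disj (Form.var (PVar.inn' x)) (Form.conj (Form.var (PVar.aw x))
      (bigDisj fun y => Form.conj (Form.var (PVar.inn' y)) (Form.var (PVar.att y x)))))

def IncludesCp (U : Type) [Fintype U] : Form U :=
  bigConj fun x => Form.impl
    (Form.disj (Form.var (PVar.inn' x)) (Form.conj (Form.var (PVar.aw x))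
      (bigDisj fun y => Form.conj (Form.var (PVar.inn' y)) (Form.var (PVar.att y x)))))
    (Form.disj (Form.var (PVar.inn x)) (Form.conj (Form.var (PVar.aw x))
      (bigDisj fun y => Form.conj (Form.var (PVar.inn y)) (Form.var (PVar.att y x)))))

/-- makeExt^σ = vary(IN_U); φ_σ? -/
def makeExt (U : Type) [Fintype U] (φ : Form U) : Prog U :=
  Prog.seq (vary (INlist U)) (Prog.test φ)

def SemiStableF (U : Type) [Fintype U] : Form U :=
  Form.conj (CompleteF U)
    (Form.box (Prog.seq (copyIN U) (makeExt U (CompleteF U)))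
      (Form.impl (IncludesCp U) (IncludedInCp U)))

/-- A_v -/
def Av (v : Val U) : Set U := {x | PVar.aw x ∈ v}
/-- R_v -/
def Rv (v : Val U) : Set (U × U) := {q | q.1 ∈ Av v ∧ q.2 ∈ Av v ∧ PVar.att q.1 q.2 ∈ v}
/-- E(v) -/
def Ev (v : Val U) : Set U := {x | PVar.inn x ∈ v}
/-- {x ∈ U : in'_x ∈ v} -/
def Cv (v : Val U) : Set U := {x | PVar.inn' x ∈ v}
/-- v_(A,R) = AW_A ∪ ATT_R -/
def valOf (A : Set U) (R : Set (U × U)) : Val U :=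
  (PVar.aw '' A) ∪ ((fun q : U × U => PVar.att q.1 q.2) '' R)

/-- E⁺, the set of arguments of A attacked by E in (A,R). -/
def attacked (A : Set U) (R : Set (U × U)) (E : Set U) : Set U :=
  {x ∈ A | ∃ y ∈ E, (y, x) ∈ R}
/-- E⊕ = E ∪ E⁺, the range of E. -/
def rangeOf (A : Set U) (R : Set (U × U)) (E : Set U) : Set U :=
  E ∪ attacked A R E

def IsConflictFree (A : Set U) (R : Set (U × U)) (E : Set U) : Prop :=
  E ⊆ A ∧ E ∩ attacked A R E = ∅
def Defends (A : Set U) (R : Set (U × U)) (E : Set U) (a : U) : Prop :=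
  ∀ x ∈ A, (x, a) ∈ R → x ∈ attacked A R E
def IsAdmissibleExt (A : Set U) (R : Set (U × U)) (E : Set U) : Prop :=
  IsConflictFree A R E ∧ ∀ a ∈ E, Defends A R E a
def IsStableExt (A : Set U) (R : Set (U × U)) (E : Set U) : Prop :=
  IsConflictFree A R E ∧ A \ E ⊆ attacked A R E
def IsCompleteExt (A : Set U) (R : Set (U × U)) (E : Set U) : Prop :=
  IsConflictFree A R E ∧ E = {a ∈ A | Defends A R E a}
def IsGroundedExt (A : Set U) (R : Set (U × U)) (E : Set U) : Prop :=
  IsCompleteExt A R E ∧ ∀ E', IsCompleteExt A R E' → E' ⊆ E → E' = E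
def IsPreferredExt (A : Set U) (R : Set (U × U)) (E : Set U) : Prop :=
  IsCompleteExt A R E ∧ ∀ E', IsCompleteExt A R E' → E ⊆ E' → E' = E
def IsNaiveExt (A : Set U) (R : Set (U × U)) (E : Set U) : Prop :=
  IsConflictFree A R E ∧ ∀ E', IsConflictFree A R E' → E ⊆ E' → E' = E
def IsSemiStableExt (A : Set U) (R : Set (U × U)) (E : Set U) : Prop :=
  IsCompleteExt A R E ∧ ¬ ∃ E', IsCompleteExt A R E' ∧ rangeOf A R E ⊂ rangeOf A R E'

end DLPA

end

noncomputable section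
open DLPA

/-- The list of awareness variables of a finite set of arguments, in a fixed order. -/
def AWlist {U : Type} (A : Finset U) : List (PVar U) := A.toList.map PVar.aw
/-- The list of attack variables of a finite attack relation, in a fixed order. -/
def ATTlist {U : Type} (R : Finset (U × U)) : List (PVar U) :=
  R.toList.map (fun q => PVar.att q.1 q.2)

/-- The defining conditions of an incomplete AF (A^F, R^F, A^?, R^?). -/
def IAFConds {U : Type} (AF Aq : Set U) (RF Rq : Set (U × U)) : Prop :=
  Disjoint AF Aq ∧ Disjoint RF Rq ∧
    RF ⊆ (AF ∪ Aq) ×ˢ (AF ∪ Aq) ∧ Rq ⊆ (AF ∪ Aq) ×ˢ (AF ∪ Aq)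

/-- (A*, R*) is a completion of the IAF (A^F, R^F, A^?, R^?). -/
def IsCompletionOfIAF {U : Type} (AF Aq : Set U) (RF Rq : Set (U × U))
    (As : Set U) (Rs : Set (U × U)) : Prop :=
  AF ⊆ As ∧ As ⊆ AF ∪ Aq ∧
    RF ∩ As ×ˢ As ⊆ Rs ∧ Rs ⊆ (RF ∪ Rq) ∩ As ×ˢ As

end

noncomputable section
open DLPA

/-- The defining conditions of a control AF (A^F, R^F, A^?, R^?, R^↔, A^C, R^C). -/
def CAFConds {U : Type} (AF Aq : Set U) (RF Rq Rl : Set (U × U))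
    (AC : Set U) (RC : Set (U × U)) : Prop :=
  Disjoint AF Aq ∧ Disjoint AF AC ∧ Disjoint Aq AC ∧
    RF ⊆ (AF ∪ Aq) ×ˢ (AF ∪ Aq) ∧ Rq ⊆ (AF ∪ Aq) ×ˢ (AF ∪ Aq) ∧
    Rl ⊆ (AF ∪ Aq) ×ˢ (AF ∪ Aq) ∧
    (∀ x y, (x, y) ∈ Rl → (y, x) ∈ Rl) ∧ (∀ x, (x, x) ∉ Rl) ∧
    RC ⊆ (AC ×ˢ (AF ∪ Aq ∪ AC)) ∪ ((AF ∪ Aq ∪ AC) ×ˢ AC) ∧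
    Disjoint RF Rq ∧ Disjoint RF Rl ∧ Disjoint RF RC ∧
    Disjoint Rq Rl ∧ Disjoint Rq RC ∧ Disjoint Rl RC

/-- (A*, R*) is a completion of the CAF (A^F, R^F, A^?, R^?, R^↔, A^C, R^C). -/
def IsCompletionOfCAF {U : Type} (AF Aq : Set U) (RF Rq Rl : Set (U × U))
    (AC : Set U) (RC : Set (U × U)) (As : Set U) (Rs : Set (U × U)) : Prop :=
  AF ∪ AC ⊆ As ∧ As ⊆ AF ∪ AC ∪ Aq ∧
    (RF ∪ RC) ∩ As ×ˢ As ⊆ Rs ∧ Rs ⊆ (RF ∪ RC ∪ Rq ∪ Rl) ∩ As ×ˢ As ∧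
    ∀ x y, x ∈ As → y ∈ As → (x, y) ∈ Rl → ((x, y) ∈ Rs ∨ (y, x) ∈ Rs)

end

section Aux
open DLPA
variable {U : Type}

lemma sat_top (v : Val U) : Sat v Form.top := by
  simp [Form.top, Form.falsum, Sat]

lemma rel_skip {v w : Val U} : Rel Prog.skip v w ↔ w = v := by
  simp [Prog.skip, DLPA.Rel, sat_top]

lemma mkTrueSome_fwd : ∀ (L : List (PVar U)) {v w : Val U},
    Rel (mkTrueSome L) v w → v ⊆ w ∧ w ⊆ v ∪ {p | p ∈ L}
  | [], v, w, h => by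
      rw [mkTrueSome, seqList, rel_skip] at h
      subst h; simp
  | p :: ps, v, w, h => by
      rw [mkTrueSome, seqList] at h
      rw [DLPA.Rel] at h
      obtain ⟨u, h1, h2⟩ := h
      rw [DLPA.Rel] at h1
      have := mkTrueSome_fwd ps h2
      rcases h1 with h1 | h1
      · rw [DLPA.Rel] at h1
        subst h1
        constructor
        · exact (Set.subset_union_left).trans this.1
        · intro q hq
          rcases this.2 hq with hq | hq
          · rcases hq with hq | hq
            · exact Or.inl hq
            · exact Or.inr (by simp only [Set.mem_setOf_eq, List.mem_cons]; exact Or.inl (by simpa using hq))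
          · exact Or.inr (by simp; right; exact hq)
      · rw [rel_skip] at h1
        subst h1
        refine ⟨this.1, fun q hq => ?_⟩
        rcases this.2 hq with hq | hq
        · exact Or.inl hq
        · exact Or.inr (by simp; right; exact hq)

lemma mkTrueSome_bwd : ∀ (L : List (PVar U)) {v w : Val U},
    v ⊆ w → w ⊆ v ∪ {p | p ∈ L} → Rel (mkTrueSome L) v w
  | [], v, w, h1, h2 => by
      rw [mkTrueSome, seqList, rel_skip]
      apply Set.Subset.antisymm _ h1
      intro q hq
      rcases h2 hq with h | h
      · exact h
      · simp at h
  | p :: ps, v, w, h1, h2 => by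
      rw [mkTrueSome, seqList]
      rw [DLPA.Rel]
      by_cases hp : p ∈ w
      · refine ⟨v ∪ {p}, Or.inl (by rw [DLPA.Rel]), ?_⟩
        apply mkTrueSome_bwd ps
        · intro q hq
          rcases hq with hq | hq
          · exact h1 hq
          · simp at hq; rwa [hq]
        · intro q hq
          rcases h2 hq with h | h
          · exact Or.inl (Or.inl h)
          · simp at h
            rcases h with h | h
            · exact Or.inl (Or.inr (by simp [h]))
            · exact Or.inr h
      · refine ⟨v, Or.inr (by rw [rel_skip]), ?_⟩
        apply mkTrueSome_bwd ps h1
        intro q hq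
        rcases h2 hq with h | h
        · exact Or.inl h
        · simp at h
          rcases h with h | h
          · exact absurd (h ▸ hq) hp
          · exact Or.inr h

lemma dis_fwd : ∀ (L : List (U × U)) {v w : Val U},
    Rel (dis L) v w → v ⊆ w ∧
      (w ⊆ v ∪ {p | ∃ q ∈ L, p = PVar.att q.1 q.2 ∨ p = PVar.att q.2 q.1}) ∧
      (∀ q ∈ L, PVar.att q.1 q.2 ∈ w ∨ PVar.att q.2 q.1 ∈ w)
  | [], v, w, h => by
      rw [dis, seqList, rel_skip] at h
      subst h; simp
  | q :: L, v, w, h => by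
      rw [dis, seqList] at h
      rw [DLPA.Rel] at h
      obtain ⟨u, h1, h2⟩ := h
      rw [DLPA.Rel] at h1
      have ih := dis_fwd L h2
      have hcase : (u = v ∪ {PVar.att q.1 q.2} ∧ PVar.att q.1 q.2 ∈ u) ∨
          (u = v ∪ {PVar.att q.2 q.1} ∧ PVar.att q.2 q.1 ∈ u) := by
        rcases h1 with h1 | h1
        · rw [DLPA.Rel] at h1; exact Or.inl ⟨h1, by simp [h1]⟩
        · rw [DLPA.Rel] at h1; exact Or.inr ⟨h1, by simp [h1]⟩
      rcases hcase with ⟨hu, hm⟩ | ⟨hu, hm⟩ <;>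
      · subst hu
        refine ⟨Set.subset_union_left.trans ih.1, ?_, ?_⟩
        · intro p hp
          rcases ih.2.1 hp with hp' | hp'
          · rcases hp' with hp' | hp'
            · exact Or.inl hp'
            · simp at hp'
              exact Or.inr ⟨q, by simp, by simp [hp']⟩
          · obtain ⟨r, hr, hor⟩ := hp'
            exact Or.inr ⟨r, by simp [hr], hor⟩
        · intro r hr
          rcases List.mem_cons.1 hr with hr | hr
          · subst hr
            first
            | exact Or.inl (ih.1 hm)
            | exact Or.inr (ih.1 hm)
          · exact ih.2.2 r hr

lemma dis_bwd : ∀ (L : List (U × U)) (c : U × U → U × U)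
    (hc : ∀ q, c q = q ∨ c q = q.swap) (v : Val U),
    Rel (dis L) v (v ∪ {p | ∃ q ∈ L, p = PVar.att (c q).1 (c q).2})
  | [], c, hc, v => by
      rw [dis, seqList, rel_skip]
      simp
  | q :: L, c, hc, v => by
      rw [dis, seqList]
      rw [DLPA.Rel]
      refine ⟨v ∪ {PVar.att (c q).1 (c q).2}, ?_, ?_⟩
      · rcases hc q with h | h <;> rw [h]
        · exact Or.inl (by rw [DLPA.Rel])
        · exact Or.inr (by rw [DLPA.Rel]; simp)
      · have := dis_bwd L c hc (v ∪ {PVar.att (c q).1 (c q).2})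
        convert this using 1
        · rfl
        ext p
        simp only [Set.mem_union, Set.mem_setOf_eq, Set.mem_singleton_iff, List.mem_cons]
        constructor
        · rintro (hp | ⟨r, hr | hr, hpr⟩)
          · exact Or.inl (Or.inl hp)
          · exact Or.inl (Or.inr (by rw [hr] at hpr; exact hpr))
          · exact Or.inr ⟨r, hr, hpr⟩
        · rintro ((hp | hp) | ⟨r, hr, hpr⟩)
          · exact Or.inl hp
          · exact Or.inr ⟨q, Or.inl rfl, hp⟩
          · exact Or.inr ⟨r, Or.inr hr, hpr⟩

lemma aw_mem_valOf {A : Set U} {R : Set (U × U)} {x : U} :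
    PVar.aw x ∈ valOf A R ↔ x ∈ A := by
  simp [valOf]

lemma att_mem_valOf {A : Set U} {R : Set (U × U)} {x y : U} :
    PVar.att x y ∈ valOf A R ↔ (x, y) ∈ R := by
  constructor
  · rintro (⟨a, _, h⟩ | ⟨⟨a, b⟩, hq, h⟩)
    · exact absurd h (by simp)
    · obtain ⟨rfl, rfl⟩ := PVar.att.inj h
      exact hq
  · intro h
    exact Or.inr ⟨(x, y), h, rfl⟩
end Aux

open DLPA in
/-- Proposition 10. -/
theorem control_makeComp_CAF_correct
    (U : Type) [Fintype U] [Nonempty U]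
    (AF Aq AC : Finset U) (RF Rq Rl RC : Finset (U × U))
    (hCAF : CAFConds (AF : Set U) (Aq : Set U) (RF : Set (U × U)) (Rq : Set (U × U))
      (Rl : Set (U × U)) (AC : Set U) (RC : Set (U × U))) :
    (∀ v : Val U,
        Rel (Prog.seq (mkTrueSome (AWlist AC))
              (Prog.seq (mkTrueSome (AWlist Aq))
                (Prog.seq (mkTrueSome (ATTlist Rq)) (dis Rl.toList))))
            (valOf (AF : Set U) ((RF : Set (U × U)) ∪ (RC : Set (U × U)))) v →
        ∃ CFG : Set U, CFG ⊆ (AC : Set U) ∧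
          ∃ (As : Set U) (Rs : Set (U × U)),
            IsCompletionOfCAF (AF : Set U) (Aq : Set U) (RF : Set (U × U)) (Rq : Set (U × U))
              (Rl : Set (U × U)) CFG
              ((RC : Set (U × U)) ∩
                (((AF : Set U) ∪ (Aq : Set U) ∪ CFG) ×ˢ ((AF : Set U) ∪ (Aq : Set U) ∪ CFG)))
              As Rs ∧
            Av v = As ∧ Rv v = Rs) ∧
    (∀ CFG : Set U, CFG ⊆ (AC : Set U) →
      ∀ (As : Set U) (Rs : Set (U × U)),
        IsCompletionOfCAF (AF : Set U) (Aq : Set U) (RF : Set (U × U)) (Rq : Set (U × U))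
          (Rl : Set (U × U)) CFG
          ((RC : Set (U × U)) ∩
            (((AF : Set U) ∪ (Aq : Set U) ∪ CFG) ×ˢ ((AF : Set U) ∪ (Aq : Set U) ∪ CFG)))
          As Rs →
        ∃ v : Val U,
          Rel (Prog.seq (mkTrueSome (AWlist AC))
                (Prog.seq (mkTrueSome (AWlist Aq))
                  (Prog.seq (mkTrueSome (ATTlist Rq)) (dis Rl.toList))))
              (valOf (AF : Set U) ((RF : Set (U × U)) ∪ (RC : Set (U × U)))) v ∧
          Av v = As ∧ Rv v = Rs) := by
  classical
  obtain ⟨hd1, hd2, hd3, hRF, hRq, hRl, hRlsym, hRlirr, hRCsub, _⟩ := hCAF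
  constructor
  · -- part (i)
    intro v hrel
    rw [DLPA.Rel] at hrel
    obtain ⟨u1, hA, hrel⟩ := hrel
    rw [DLPA.Rel] at hrel
    obtain ⟨u2, hB, hrel⟩ := hrel
    rw [DLPA.Rel] at hrel
    obtain ⟨u3, hC, hD⟩ := hrel
    have hA' := mkTrueSome_fwd _ hA
    have hB' := mkTrueSome_fwd _ hB
    have hC' := mkTrueSome_fwd _ hC
    have hD' := dis_fwd _ hD
    set v0 : Val U := valOf (AF : Set U) ((RF : Set (U × U)) ∪ (RC : Set (U × U))) with hv0
    have hsub : v0 ⊆ v := hA'.1.trans (hB'.1.trans (hC'.1.trans hD'.1))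
    have hmem : ∀ p ∈ v, p ∈ v0 ∨ (∃ x ∈ AC, p = PVar.aw x) ∨ (∃ x ∈ Aq, p = PVar.aw x) ∨
        (∃ q ∈ Rq, p = PVar.att q.1 q.2) ∨
        (∃ q ∈ Rl, p = PVar.att q.1 q.2 ∨ p = PVar.att q.2 q.1) := by
      intro p hp
      rcases hD'.2.1 hp with hp | hp
      swap
      · obtain ⟨q, hq, hor⟩ := hp
        exact Or.inr (Or.inr (Or.inr (Or.inr ⟨q, Finset.mem_toList.1 hq, hor⟩)))
      rcases hC'.2 hp with hp | hp
      swap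
      · simp only [Set.mem_setOf_eq, ATTlist, List.mem_map, Finset.mem_toList] at hp
        obtain ⟨q, hq, he⟩ := hp
        exact Or.inr (Or.inr (Or.inr (Or.inl ⟨q, hq, he.symm⟩)))
      rcases hB'.2 hp with hp | hp
      swap
      · simp only [Set.mem_setOf_eq, AWlist, List.mem_map, Finset.mem_toList] at hp
        obtain ⟨x, hx, he⟩ := hp
        exact Or.inr (Or.inr (Or.inl ⟨x, hx, he.symm⟩))
      rcases hA'.2 hp with hp | hp
      · exact Or.inl hp
      · simp only [Set.mem_setOf_eq, AWlist, List.mem_map, Finset.mem_toList] at hp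
        obtain ⟨x, hx, he⟩ := hp
        exact Or.inr (Or.inl ⟨x, hx, he.symm⟩)
    refine ⟨(AC : Set U) ∩ Av v, Set.inter_subset_left, Av v, Rv v, ?_, rfl, rfl⟩
    have hAs2 : Av v ⊆ (AF : Set U) ∪ ((AC : Set U) ∩ Av v) ∪ (Aq : Set U) := by
      intro x hx
      rcases hmem _ hx with h | h | h | h | h
      · left; left
        exact aw_mem_valOf.1 h
      · obtain ⟨y, hy, he⟩ := h
        obtain rfl := PVar.aw.inj he
        exact Or.inl (Or.inr ⟨hy, hx⟩)
      · obtain ⟨y, hy, he⟩ := h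
        obtain rfl := PVar.aw.inj he
        exact Or.inr hy
      · obtain ⟨q, _, he⟩ := h
        exact absurd he (by simp)
      · obtain ⟨q, _, he | he⟩ := h <;> exact absurd he (by simp)
    have hAs2' : Av v ⊆ (AF : Set U) ∪ (Aq : Set U) ∪ ((AC : Set U) ∩ Av v) := by
      intro x hx
      rcases hAs2 hx with (h | h) | h
      · exact Or.inl (Or.inl h)
      · exact Or.inr h
      · exact Or.inl (Or.inr h)
    refine ⟨?_, ?_, ?_, ?_, ?_⟩
    · rintro x (hx | hx)
      · exact hsub (aw_mem_valOf.2 hx)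
      · exact hx.2
    · intro x hx
      rcases hAs2 hx with (h | h) | h
      · exact Or.inl (Or.inl h)
      · exact Or.inl (Or.inr h)
      · exact Or.inr h
    · rintro ⟨a, b⟩ ⟨hq, ha, hb⟩
      refine ⟨ha, hb, hsub (att_mem_valOf.2 ?_)⟩
      rcases hq with hq | hq
      · exact Or.inl hq
      · exact Or.inr hq.1
    · rintro ⟨a, b⟩ ⟨ha, hb, hatt⟩
      refine ⟨?_, ha, hb⟩
      rcases hmem _ hatt with h | h | h | h | h
      · rcases att_mem_valOf.1 h with h | h
        · exact Or.inl (Or.inl (Or.inl h))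
        · exact Or.inl (Or.inl (Or.inr ⟨h, hAs2' ha, hAs2' hb⟩))
      · obtain ⟨x, _, he⟩ := h
        exact absurd he (by simp)
      · obtain ⟨x, _, he⟩ := h
        exact absurd he (by simp)
      · obtain ⟨q, hq, he⟩ := h
        obtain ⟨rfl, rfl⟩ := PVar.att.inj he
        exact Or.inl (Or.inr hq)
      · obtain ⟨q, hq, he | he⟩ := h
        · obtain ⟨rfl, rfl⟩ := PVar.att.inj he
          exact Or.inr hq
        · obtain ⟨rfl, rfl⟩ := PVar.att.inj he
          exact Or.inr (hRlsym _ _ hq)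
    · intro x y hx hy hxy
      rcases hD'.2.2 (x, y) (Finset.mem_toList.2 hxy) with h | h
      · exact Or.inl ⟨hx, hy, h⟩
      · exact Or.inr ⟨hy, hx, h⟩
  · -- part (ii)
    intro CFG hCFG As Rs hcomp
    obtain ⟨h1, h2, h3, h4, h5⟩ := hcomp
    set v0 : Val U := valOf (AF : Set U) ((RF : Set (U × U)) ∪ (RC : Set (U × U))) with hv0
    set c : U × U → U × U := fun q => if q ∉ Rs ∧ q.swap ∈ Rs then q.swap else q with hcdef
    have hc : ∀ q, c q = q ∨ c q = q.swap := by
      intro q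
      by_cases h : q ∉ Rs ∧ q.swap ∈ Rs
      · exact Or.inr (by simp [hcdef, h])
      · exact Or.inl (by simp [hcdef, h])
    set u1 : Val U := v0 ∪ PVar.aw '' (As ∩ (AC : Set U)) with hu1
    set u2 : Val U := u1 ∪ PVar.aw '' (As ∩ (Aq : Set U)) with hu2
    set u3 : Val U := u2 ∪ (fun q : U × U => PVar.att q.1 q.2) '' (Rs ∩ (Rq : Set (U × U))) with hu3
    set v : Val U := u3 ∪ {p | ∃ q ∈ Rl.toList, p = PVar.att (c q).1 (c q).2} with hv
    have hAsAC : ∀ x ∈ As, x ∈ (AF : Set U) ∨ x ∈ As ∩ (AC : Set U) ∨ x ∈ As ∩ (Aq : Set U) := by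
      intro x hx
      rcases h2 hx with (h | h) | h
      · exact Or.inl h
      · exact Or.inr (Or.inl ⟨hx, hCFG h⟩)
      · exact Or.inr (Or.inr ⟨hx, h⟩)
    have hAv : Av v = As := by
      ext x
      constructor
      · rintro (((((hx | hx) | hx) | hx) | hx) | hx)
        · obtain ⟨y, hy, he⟩ := hx
          obtain rfl := PVar.aw.inj he
          exact h1 (Or.inl hy)
        · obtain ⟨q, _, he⟩ := hx
          exact absurd he (by simp)
        · obtain ⟨y, hy, he⟩ := hx
          obtain rfl := PVar.aw.inj he
          exact hy.1
        · obtain ⟨y, hy, he⟩ := hx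
          obtain rfl := PVar.aw.inj he
          exact hy.1
        · obtain ⟨q, _, he⟩ := hx
          exact absurd he (by simp)
        · obtain ⟨q, _, he⟩ := hx
          exact absurd he (by simp)
      · intro hx
        rcases hAsAC x hx with h | h | h
        · exact Or.inl (Or.inl (Or.inl (Or.inl (Or.inl ⟨x, h, rfl⟩))))
        · exact Or.inl (Or.inl (Or.inl (Or.inr ⟨x, h, rfl⟩)))
        · exact Or.inl (Or.inl (Or.inr ⟨x, h, rfl⟩))
    have hAFAqCFG : ∀ x ∈ As, x ∈ (AF : Set U) ∪ (Aq : Set U) ∪ CFG := by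
      intro x hx
      rcases h2 hx with (h | h) | h
      · exact Or.inl (Or.inl h)
      · exact Or.inr h
      · exact Or.inl (Or.inr h)
    have hRv : Rv v = Rs := by
      ext ⟨a, b⟩
      constructor
      · rintro ⟨ha, hb, hatt⟩
        rw [hAv] at ha hb
        rcases hatt with (((((hatt | hatt) | hatt) | hatt) | hatt) | hatt)
        · obtain ⟨y, _, he⟩ := hatt
          exact absurd he (by simp)
        · obtain ⟨⟨qa, qb⟩, hq, he⟩ := hatt
          obtain ⟨rfl, rfl⟩ := PVar.att.inj he
          rcases hq with h | h
          · exact h3 ⟨Or.inl h, ha, hb⟩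
          · exact h3 ⟨Or.inr ⟨h, hAFAqCFG _ ha, hAFAqCFG _ hb⟩, ha, hb⟩
        · obtain ⟨y, _, he⟩ := hatt
          exact absurd he (by simp)
        · obtain ⟨y, _, he⟩ := hatt
          exact absurd he (by simp)
        · obtain ⟨⟨qa, qb⟩, hq, he⟩ := hatt
          obtain ⟨rfl, rfl⟩ := PVar.att.inj he
          exact hq.1
        · obtain ⟨⟨qa, qb⟩, hq, he⟩ := hatt
          rw [Finset.mem_toList] at hq
          by_cases hcond : (qa, qb) ∉ Rs ∧ ((qa, qb) : U × U).swap ∈ Rs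
          · have hcq : c (qa, qb) = (qb, qa) := by
              simp only [hcdef]; rw [if_pos hcond, Prod.swap_prod_mk]
            rw [hcq] at he
            obtain ⟨rfl, rfl⟩ := PVar.att.inj he
            simpa using hcond.2
          · have hcq : c (qa, qb) = (qa, qb) := by simp only [hcdef]; rw [if_neg hcond]
            rw [hcq] at he
            obtain ⟨rfl, rfl⟩ := PVar.att.inj he
            rcases h5 _ _ ha hb hq with h | h
            · exact h
            · by_contra hno
              exact hcond ⟨hno, by simpa using h⟩
      · intro hq
        obtain ⟨hq1, ha, hb⟩ := h4 hq
        refine ⟨by rw [hAv]; exact ha, by rw [hAv]; exact hb, ?_⟩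
        rcases hq1 with ((h | h) | h) | h
        · exact Or.inl (Or.inl (Or.inl (Or.inl (Or.inr ⟨(a, b), Or.inl h, rfl⟩))))
        · exact Or.inl (Or.inl (Or.inl (Or.inl (Or.inr ⟨(a, b), Or.inr h.1, rfl⟩))))
        · exact Or.inl (Or.inr ⟨(a, b), ⟨hq, h⟩, rfl⟩)
        · refine Or.inr ⟨(a, b), Finset.mem_toList.2 h, ?_⟩
          have hcq : c (a, b) = (a, b) := by
            simp only [hcdef]
            rw [if_neg (by intro hcon; exact hcon.1 hq)]
          rw [hcq]
    refine ⟨v, ?_, hAv, hRv⟩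
    rw [DLPA.Rel]
    refine ⟨u1, ?_, ?_⟩
    · apply mkTrueSome_bwd
      · exact Set.subset_union_left
      · rintro p (hp | ⟨x, hx, rfl⟩)
        · exact Or.inl hp
        · refine Or.inr ?_
          simp only [Set.mem_setOf_eq, AWlist, List.mem_map, Finset.mem_toList]
          exact ⟨x, hx.2, rfl⟩
    rw [DLPA.Rel]
    refine ⟨u2, ?_, ?_⟩
    · apply mkTrueSome_bwd
      · exact Set.subset_union_left
      · rintro p (hp | ⟨x, hx, rfl⟩)
        · exact Or.inl hp
        · refine Or.inr ?_
          simp only [Set.mem_setOf_eq, AWlist, List.mem_map, Finset.mem_toList]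
          exact ⟨x, hx.2, rfl⟩
    rw [DLPA.Rel]
    refine ⟨u3, ?_, ?_⟩
    · apply mkTrueSome_bwd
      · exact Set.subset_union_left
      · rintro p (hp | ⟨q, hq, rfl⟩)
        · exact Or.inl hp
        · refine Or.inr ?_
          simp only [Set.mem_setOf_eq, ATTlist, List.mem_map, Finset.mem_toList]
          exact ⟨q, hq.2, rfl⟩
    · exact dis_bwd _ c hc u3
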